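/- Assume q_0 > 0 and z_j > 0 for all j (so the PB system has no equilibrium). Fix φ_0 ∈ ℝ and, for each L > 0, let φ_L be the unique twice continuously differentiable solution of φ″ + f(φ) = 0 on [−L/2, L/2] with φ_L(−L/2) = φ_L(L/2) = φ_0, and set σ(L) = |φ_L′(−L/2)|. Then σ(L) → +∞ as L → ∞ (no saturation of the surface charge density in the absence of equilibrium). -/

import Mathlib

open Real Filter Set Topology

/-- A (C²) solution of the PB equation `φ'' + f(φ) = 0` on `[a, b]`, written as the
first-order planar system `φ' = u`, `u' = -f(φ)`. -/
def IsPBSol (f : ℝ → ℝ) (a b : ℝ) (φ u : ℝ → ℝ) : Prop :=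
  ∀ x ∈ Set.Icc a b,
    HasDerivWithinAt φ (u x) (Set.Icc a b) x ∧
    HasDerivWithinAt u (-(f (φ x))) (Set.Icc a b) x

/-- No saturation of the surface charge density in the absence of
equilibrium.  If `q0 > 0` and all `z j > 0`, with `φ_L` the solution of the
equal-potential Dirichlet problem with value `φ0` on `[-L/2, L/2]` and
`σ(L) = |φ_L'(-L/2)|`, then `σ(L) → +∞` as `L → ∞`. -/
theorem stmt12 {N : ℕ} (hN : 1 ≤ N) (z c : Fin N → ℝ)
    (hz : ∀ j, z j ≠ 0) (hc : ∀ j, 0 < c j) (q0 : ℝ)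
    (f : ℝ → ℝ)
    (hf : ∀ φ : ℝ, f φ = q0 + ∑ j, z j * c j * Real.exp (-(z j) * φ))
    (hq0 : 0 < q0) (hzpos : ∀ j, 0 < z j)
    (φ0 : ℝ)
    (φf uf : ℝ → ℝ → ℝ)
    (hsol : ∀ L : ℝ, 0 < L →
      IsPBSol f (-(L / 2)) (L / 2) (φf L) (uf L) ∧
      φf L (-(L / 2)) = φ0 ∧ φf L (L / 2) = φ0)
    (σ : ℝ → ℝ) (hσ : ∀ L : ℝ, σ L = |uf L (-(L / 2))|) :
    Tendsto σ atTop atTop := by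
  -- f is bounded below by q0
  have hfq : ∀ y : ℝ, q0 ≤ f y := by
    intro y
    rw [hf y]
    have : (0:ℝ) ≤ ∑ j, z j * c j * Real.exp (-(z j) * y) :=
      Finset.sum_nonneg fun j _ =>
        (mul_pos (mul_pos (hzpos j) (hc j)) (Real.exp_pos _)).le
    linarith
  -- key lower bound: σ L ≥ q0 * L / 2 for L > 0
  have key : ∀ L : ℝ, 0 < L → q0 * L / 2 ≤ σ L := by
    intro L hL
    set a : ℝ := -(L / 2) with ha
    set b : ℝ := L / 2 with hb
    have hab : a < b := by simp only [ha, hb]; linarith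
    obtain ⟨hPB, hφa, hφb⟩ := hsol L hL
    set φ : ℝ → ℝ := φf L
    set u : ℝ → ℝ := uf L
    have hφ' : ∀ x ∈ Set.Icc a b, HasDerivWithinAt φ (u x) (Set.Icc a b) x :=
      fun x hx => (hPB x hx).1
    have hu' : ∀ x ∈ Set.Icc a b, HasDerivWithinAt u (-(f (φ x))) (Set.Icc a b) x :=
      fun x hx => (hPB x hx).2
    have hconv : Convex ℝ (Set.Icc a b) := convex_Icc a b
    have hint : interior (Set.Icc a b) ⊆ Set.Icc a b := interior_subset
    have haI : a ∈ Set.Icc a b := ⟨le_refl a, le_of_lt hab⟩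
    have hbI : b ∈ Set.Icc a b := ⟨le_of_lt hab, le_refl b⟩
    -- step 1: h = u + q0 * x is antitone
    have hder1 : ∀ x ∈ Set.Icc a b,
        HasDerivWithinAt (fun x => u x + q0 * x) (-(f (φ x)) + q0) (Set.Icc a b) x := by
      intro x hx
      have := (hu' x hx).add (((hasDerivAt_id x).const_mul q0).hasDerivWithinAt)
      rw [mul_one] at this; exact this
    have hmono1 : AntitoneOn (fun x => u x + q0 * x) (Set.Icc a b) := by
      apply antitoneOn_of_hasDerivWithinAt_nonpos hconv
        (f' := fun x => -(f (φ x)) + q0)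
      · intro x hx
        exact (hder1 x hx).continuousWithinAt
      · intro x hx
        exact (hder1 x (hint hx)).mono hint
      · intro x _
        have := hfq (φ x)
        linarith
    -- so u x ≤ u a + q0 * (a - x)
    have hub : ∀ x ∈ Set.Icc a b, u x ≤ u a - q0 * (x - a) := by
      intro x hx
      have := hmono1 haI hx hx.1
      simp only at this
      linarith
    -- step 2: G = φ - u a * (x - a) + q0 * (x - a)^2 / 2 is antitone
    have hder2 : ∀ x ∈ Set.Icc a b,
        HasDerivWithinAt (fun x => φ x + (-(u a * (x - a)) + q0 * (x - a) ^ 2 / 2))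
          (u x + (-(u a) + q0 * (x - a))) (Set.Icc a b) x := by
      intro x hx
      have hpoly : HasDerivAt (fun x : ℝ => -(u a * (x - a)) + q0 * (x - a) ^ 2 / 2)
          (-(u a) + q0 * (x - a)) x := by
        have h1 : HasDerivAt (fun x : ℝ => x - a) 1 x := by
          simpa using (hasDerivAt_id x).sub_const a
        have h2 := (h1.const_mul (u a)).neg
        have h3 := ((h1.pow 2).const_mul q0).div_const 2
        have := h2.add h3
        exact this.congr_deriv (by ring)
      exact (hφ' x hx).add hpoly.hasDerivWithinAt
    have hmono2 : AntitoneOn (fun x => φ x + (-(u a * (x - a)) + q0 * (x - a) ^ 2 / 2))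
        (Set.Icc a b) := by
      apply antitoneOn_of_hasDerivWithinAt_nonpos hconv
        (f' := fun x => u x + (-(u a) + q0 * (x - a)))
      · intro x hx
        exact (hder2 x hx).continuousWithinAt
      · intro x hx
        exact (hder2 x (hint hx)).mono hint
      · intro x hx
        have := hub x (hint hx)
        linarith
    have hGle := hmono2 haI hbI (le_of_lt hab)
    simp only at hGle
    have hba : b - a = L := by simp only [ha, hb]; ring
    rw [hφa, hφb] at hGle
    -- from hGle : φ0 - u a * (b - a) + q0 * (b-a)^2/2 ≤ φ0 - 0 + 0
    have huaL : q0 * L / 2 ≤ u a := by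
      rw [hba] at hGle
      simp only [sub_self] at hGle
      nlinarith
    calc q0 * L / 2 ≤ u a := huaL
      _ ≤ |u a| := le_abs_self _
      _ = σ L := (hσ L).symm
  -- conclude
  have htend : Tendsto (fun L : ℝ => q0 * L / 2) atTop atTop := by
    apply Tendsto.atTop_div_const (by norm_num)
    exact Tendsto.const_mul_atTop hq0 tendsto_id
  apply tendsto_atTop_mono' _ _ htend
  filter_upwards [eventually_gt_atTop 0] with L hL
  exact key L hL
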